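/- For any Boolean function f on variables x_1,...,x_n and any variable x in Var(f): every prime implicant of f is either a prime implicant of (f | x̄) ∧ (f | x), or of the form x̄ ∧ t with t a prime implicant of f | x̄, or of the form x ∧ t with t a prime implicant of f | x. -/
import Mathlib


/-- A term (or clause) over variables `V`: a finite set of literals,
where a literal is a pair (variable, polarity). -/
abbrev Term (V : Type*) := Finset (V × Bool)

/-- An assignment `y` satisfies a term `t` if all its literals hold. -/
def Term.sat {V : Type*} (t : Term V) (y : V → Bool) : Prop :=
  ∀ p ∈ t, y p.1 = p.2

/-- A term is consistent if no variable occurs with both polarities. -/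
def Term.consistent {V : Type*} (t : Term V) : Prop :=
  ∀ v : V, ¬((v, true) ∈ t ∧ (v, false) ∈ t)

/-- `t` is an implicant of `f`: a consistent term all of whose models are models of `f`. -/
def Implicant {V : Type*} (f : (V → Bool) → Bool) (t : Term V) : Prop :=
  Term.consistent t ∧ ∀ y, Term.sat t y → f y = true

/-- `t` is a prime implicant of `f`: an implicant no proper subterm of which is an implicant. -/
def PrimeImplicant {V : Type*} (f : (V → Bool) → Bool) (t : Term V) : Prop :=
  Implicant f t ∧ ∀ s ⊂ t, ¬ Implicant f s

/-- A sufficient reason for `x` given `f`: a prime implicant of `f` covering `x`. -/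
def SuffReason {V : Type*} (f : (V → Bool) → Bool) (x : V → Bool) (t : Term V) : Prop :=
  PrimeImplicant f t ∧ Term.sat t x

/-- Conditioning of `f` by the literal `ℓ`: substitute the value making `ℓ` true. -/
def condF {V : Type*} [DecidableEq V] (f : (V → Bool) → Bool) (l : V × Bool) :
    (V → Bool) → Bool :=
  fun y => f (Function.update y l.1 l.2)

lemma consistent_subset {V : Type*} {s t : Term V} (h : s ⊆ t)
    (ht : Term.consistent t) : Term.consistent s :=
  fun v hv => ht v ⟨h hv.1, h hv.2⟩

lemma aux_lit {n : ℕ} (f : (Fin n → Bool) → Bool) (i : Fin n) (b : Bool)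
    (t : Term (Fin n)) (ht : PrimeImplicant f t) (hb : (i, b) ∈ t) :
    PrimeImplicant (condF f (i, b)) (t.erase (i, b)) := by
  obtain ⟨⟨hc, himp⟩, hprime⟩ := ht
  have hno : ∀ c, (i, c) ∉ t.erase (i, b) := by
    intro c hc'
    have h1 := Finset.mem_erase.mp hc'
    have hcb : c ≠ b := fun h => h1.1 (by rw [h])
    cases b <;> cases c <;> simp_all <;> exact hc i ⟨by assumption, by assumption⟩
  constructor
  · constructor
    · exact consistent_subset (Finset.erase_subset _ _) hc
    · intro y hy
      apply himp
      intro p hp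
      obtain ⟨v, c⟩ := p
      by_cases hvi : v = i
      · subst hvi
        have hcb : c = b := by
          by_contra hne
          cases b <;> cases c <;> simp_all <;> exact hc v ⟨by assumption, by assumption⟩
        subst hcb
        simp [Function.update_self]
      · have hp' : (v, c) ∈ t.erase (i, b) :=
          Finset.mem_erase.mpr ⟨by simp [hvi], hp⟩
        simpa [Function.update_of_ne hvi] using hy _ hp'
  · intro s hs ⟨hsc, hsimp⟩
    have hbs : (i, b) ∉ s := fun h => hno b (hs.subset h)
    apply hprime (insert (i, b) s)
    · obtain ⟨x, hx, hxs⟩ := Finset.exists_of_ssubset hs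
      constructor
      · intro p hp
        rcases Finset.mem_insert.mp hp with h | h
        · exact h ▸ hb
        · exact Finset.erase_subset _ _ (hs.subset h)
      · intro hsub
        rcases Finset.mem_insert.mp (hsub (Finset.erase_subset _ _ hx)) with h | h
        · exact (Finset.mem_erase.mp hx).1 h
        · exact hxs h
    · constructor
      · intro v hv12
        obtain ⟨h1, h2⟩ := hv12
        rcases Finset.mem_insert.mp h1 with ha | ha
        · rcases Finset.mem_insert.mp h2 with hd | hd
          · injection ha.trans hd.symm with _ hbad
            exact absurd hbad (by simp)
          · injection ha with hvi hbt
            exact hno false (hvi ▸ hs.subset hd)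
        · rcases Finset.mem_insert.mp h2 with hd | hd
          · injection hd with hvi hbf
            exact hno true (hvi ▸ hs.subset ha)
          · exact hc v ⟨Finset.erase_subset _ _ (hs.subset ha), Finset.erase_subset _ _ (hs.subset hd)⟩
      · intro y hy
        have yib : y i = b := hy (i, b) (Finset.mem_insert_self _ _)
        have hupd : Function.update y i b = y := by
          rw [← yib]; exact Function.update_eq_self _ _
        have := hsimp y (fun p hp => hy p (Finset.mem_insert_of_mem hp))
        simpa [condF, hupd] using this

/-- Every prime implicant of `f` is either a prime implicant of `(f | x̄) ∧ (f | x)`,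
or of the form `x̄ ∧ t` with `t` a prime implicant of `f | x̄`, or of the form `x ∧ t`
with `t` a prime implicant of `f | x`. -/
theorem stmt_7 {n : ℕ} (f : (Fin n → Bool) → Bool) (i : Fin n)
    (hvar : ∃ y, f (Function.update y i true) ≠ f (Function.update y i false))
    (t : Term (Fin n)) (ht : PrimeImplicant f t) :
    PrimeImplicant (fun y => condF f (i, false) y && condF f (i, true) y) t ∨
    (∃ t' : Term (Fin n), PrimeImplicant (condF f (i, false)) t' ∧ t = insert (i, false) t') ∨
    (∃ t' : Term (Fin n), PrimeImplicant (condF f (i, true)) t' ∧ t = insert (i, true) t') := by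
  by_cases h0 : (i, false) ∈ t
  · exact Or.inr (Or.inl ⟨t.erase (i, false), aux_lit f i false t ht h0,
      (Finset.insert_erase h0).symm⟩)
  by_cases h1 : (i, true) ∈ t
  · exact Or.inr (Or.inr ⟨t.erase (i, true), aux_lit f i true t ht h1,
      (Finset.insert_erase h1).symm⟩)
  left
  obtain ⟨⟨hc, himp⟩, hprime⟩ := ht
  have hno : ∀ c, (i, c) ∉ t := by intro c; cases c <;> assumption
  have key : ∀ (g : Term (Fin n)), g ⊆ t → ∀ y, Term.sat g y → ∀ b, Term.sat g (Function.update y i b) := by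
    intro g hg y hy b p hp
    obtain ⟨v, c⟩ := p
    have hvi : v ≠ i := fun h => hno c (h ▸ hg hp)
    simpa [Function.update_of_ne hvi] using hy _ hp
  constructor
  · refine ⟨hc, fun y hy => ?_⟩
    simp only [Bool.and_eq_true]
    exact ⟨himp _ (key t (le_refl t) y hy false), himp _ (key t (le_refl t) y hy true)⟩
  · rintro s hs ⟨hsc, hsimp⟩
    refine hprime s hs ⟨hsc, fun y hy => ?_⟩
    have := hsimp y hy
    simp only [Bool.and_eq_true, condF] at this
    cases hyi : y i
    · have := this.1
      rwa [← hyi, Function.update_eq_self] at this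
    · have := this.2
      rwa [← hyi, Function.update_eq_self, hyi] at this
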